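/- Let β, γ ∈ ℂ with β ≠ 0 and |β| ω₀ + |γ| ≤ ( ((1 + e²)^{3/2}/(√2 e)) (√2 + ω₀) )^{−1}. If p ∈ ℋ satisfies β p(z) + γ ≠ 0 on 𝔻 and p(z) + z p′(z)/(β p(z) + γ) ≺ √(1 + z) (principal branch), then p(z) ≺ 𝔅(z). -/

import Mathlib

open Complex

noncomputable section

/-- The open unit disk in the complex plane. -/
def unitDisk : Set ℂ := Metric.ball 0 1

/-- `f` is subordinate to `g` on the unit disk: there is an analytic Schwarz function `w`
with `w 0 = 0`, `|w z| < 1` on the disk, and `f = g ∘ w` on the disk. -/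
def Subord (f g : ℂ → ℂ) : Prop :=
  ∃ w : ℂ → ℂ, DifferentiableOn ℂ w unitDisk ∧ w 0 = 0 ∧
    (∀ z ∈ unitDisk, ‖w z‖ < 1) ∧ ∀ z ∈ unitDisk, f z = g (w z)

/-- The function `𝔅(z) = √(1 + tanh z)` (principal branch). -/
def bean (z : ℂ) : ℂ := (1 + Complex.tanh z) ^ ((1 : ℂ) / 2)

/-- `R₀ = e √(2/(e² - 1))`. -/
def R₀ : ℝ := Real.exp 1 * Real.sqrt (2 / (Real.exp 1 ^ 2 - 1))

/-- `ω₀ = max_{θ ∈ [0, 2π)} |𝔅(e^{iθ})|`. -/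
def ω₀ : ℝ :=
  sSup ((fun θ : ℝ => ‖bean (Complex.exp (θ * Complex.I))‖) '' Set.Ico 0 (2 * Real.pi))

lemma memUD {z : ℂ} : z ∈ unitDisk ↔ ‖z‖ < 1 := by
  simp [unitDisk, Metric.mem_ball, dist_zero_right]


lemma abs_half_pow (x : ℂ) : ‖x ^ ((1:ℂ)/2)‖ = Real.sqrt (‖x‖) := by
  have h : ((1:ℂ)/2) = (((1:ℝ)/2 : ℝ) : ℂ) := by norm_num
  rw [h, Complex.norm_cpow_real, Real.sqrt_eq_rpow]


lemma loglem {v : ℂ} (hv : ‖v‖ < 1) :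
    ‖Complex.log (1 + v)‖ ≤ ‖v‖ * (1 - ‖v‖)⁻¹ := by
  have h := Complex.norm_log_sub_logTaylor_le 0 (z := v) hv
  have h1 : Complex.logTaylor 1 v = 0 := by
    simp [Complex.logTaylor_succ, Complex.logTaylor_zero]
  rw [h1, sub_zero] at h
  simpa using h

lemma re_cpow_half (x : ℂ) : 0 ≤ (x ^ ((1:ℂ)/2)).re := by
  rcases eq_or_ne x 0 with h | h
  · simp [h, Complex.zero_cpow (by norm_num : ((1:ℂ)/2) ≠ 0)]
  · rw [Complex.cpow_def_of_ne_zero h, Complex.exp_re]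
    have him : (Complex.log x * ((1:ℂ)/2)).im = x.arg / 2 := by
      simp [Complex.mul_im, Complex.log_im]
      norm_num
      ring
    rw [him]
    have h1 := Complex.arg_le_pi x
    have h2 := Complex.neg_pi_lt_arg x
    have : Real.cos (x.arg / 2) ≥ 0 := by
      apply Real.cos_nonneg_of_mem_Icc
      constructor <;> [linarith; linarith]
    positivity


lemma sq_half {a : ℂ} (ha : 0 < a.re) : (a ^ 2) ^ ((1:ℂ)/2) = a := by
  have ha0 : a ≠ 0 := by
    intro h; rw [h] at ha; simp at ha
  have h2 : a ^ 2 ≠ 0 := pow_ne_zero _ ha0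
  set b := (a ^ 2) ^ ((1:ℂ)/2) with hb
  have hb2 : b ^ 2 = a ^ 2 := by
    rw [hb, sq, ← Complex.cpow_add _ _ h2]
    norm_num
  have hfac : (b - a) * (b + a) = 0 := by ring_nf; linear_combination hb2
  rcases mul_eq_zero.mp hfac with h | h
  · exact sub_eq_zero.mp h
  · exfalso
    have hba : b = -a := eq_neg_of_add_eq_zero_left h
    have := re_cpow_half (a ^ 2)
    rw [← hb, hba] at this
    simp at this
    linarith

lemma cosh_re_eq (z : ℂ) : (Complex.cosh z).re = Real.cosh z.re * Real.cos z.im := by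
  have h : z = (z.re : ℂ) + (z.im : ℂ) * I := (Complex.re_add_im z).symm
  have hexp : Complex.cosh z = ((Real.cosh z.re * Real.cos z.im : ℝ) : ℂ) +
      ((Real.sinh z.re * Real.sin z.im : ℝ) : ℂ) * I := by
    conv_lhs => rw [h]
    rw [Complex.cosh_add, Complex.cosh_mul_I, Complex.sinh_mul_I,
      ← Complex.ofReal_cosh, ← Complex.ofReal_sinh, ← Complex.ofReal_cos, ← Complex.ofReal_sin]
    push_cast
    ring
  rw [hexp]
  simp only [Complex.add_re, Complex.mul_re, Complex.I_re, Complex.I_im,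
    Complex.ofReal_re, Complex.ofReal_im]
  ring

lemma bean_circle_le (θ : ℝ) : ‖bean (Complex.exp (θ * Complex.I))‖ ≤ 3 := by
  set ζ := Complex.exp (θ * Complex.I) with hζ
  have habs : ‖ζ‖ = 1 := by
    rw [hζ, Complex.norm_exp]
    simp
  have hre : |ζ.re| ≤ 1 := by rw [← habs]; exact Complex.abs_re_le_norm ζ
  have him : |ζ.im| ≤ 1 := by rw [← habs]; exact Complex.abs_im_le_norm ζ
  -- sinh bound
  have hsinh : ‖Complex.sinh ζ‖ ≤ Real.exp 1 := by
    have hdef : Complex.sinh ζ = (Complex.exp ζ - Complex.exp (-ζ)) / 2 := rfl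
    rw [hdef]
    have h1 : ‖Complex.exp ζ‖ ≤ Real.exp 1 := by
      rw [Complex.norm_exp]
      exact Real.exp_le_exp.mpr (le_trans (le_abs_self _) hre)
    have h2 : ‖Complex.exp (-ζ)‖ ≤ Real.exp 1 := by
      rw [Complex.norm_exp]
      refine Real.exp_le_exp.mpr ?_
      have : (-ζ).re = -ζ.re := by simp
      rw [this]
      linarith [neg_abs_le ζ.re, le_abs_self ζ.re, abs_le.mp hre]
    calc ‖(Complex.exp ζ - Complex.exp (-ζ)) / 2‖
        ≤ (‖Complex.exp ζ‖ + ‖Complex.exp (-ζ)‖) / 2 := by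
          rw [norm_div]
          simp only [Complex.norm_two]
          gcongr
          exact norm_sub_le _ _
      _ ≤ Real.exp 1 := by linarith
  -- cosh lower bound
  have hcosh : (1:ℝ)/2 ≤ ‖Complex.cosh ζ‖ := by
    have h1 : (Complex.cosh ζ).re = Real.cosh ζ.re * Real.cos ζ.im := cosh_re_eq ζ
    have h2 : Real.cos ζ.im ≥ 1/2 := by
      have := Real.one_sub_sq_div_two_le_cos (x := ζ.im)
      nlinarith [abs_le.mp him]
    have h3 : Real.cosh ζ.re ≥ 1 := Real.one_le_cosh ζ.re
    calc (1:ℝ)/2 ≤ (Complex.cosh ζ).re := by nlinarith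
      _ ≤ |(Complex.cosh ζ).re| := le_abs_self _
      _ ≤ ‖Complex.cosh ζ‖ := Complex.abs_re_le_norm _
  -- tanh bound
  have htanh : ‖Complex.tanh ζ‖ ≤ 2 * Real.exp 1 := by
    rw [Complex.tanh_eq_sinh_div_cosh, norm_div]
    rw [div_le_iff₀ (by linarith)]
    nlinarith [Real.exp_pos 1]
  have hexp1 : Real.exp 1 ≤ 2.7182818286 := Real.exp_one_lt_d9.le
  have h6 : ‖1 + Complex.tanh ζ‖ ≤ 9 := by
    calc ‖1 + Complex.tanh ζ‖ ≤ 1 + ‖Complex.tanh ζ‖ := by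
          simpa using norm_add_le 1 (Complex.tanh ζ)
      _ ≤ 9 := by linarith
  rw [bean, abs_half_pow]
  nlinarith [Real.sq_sqrt (norm_nonneg (1 + Complex.tanh ζ)),
    Real.sqrt_nonneg (‖1 + Complex.tanh ζ‖),
    Real.sqrt_le_sqrt h6, Real.sq_sqrt (show (0:ℝ) ≤ 9 by norm_num),
    Real.sqrt_nonneg (9:ℝ)]

lemma omega_bddAbove : BddAbove ((fun θ : ℝ => ‖bean (Complex.exp (θ * Complex.I))‖) '' Set.Ico 0 (2 * Real.pi)) := by
  refine ⟨3, ?_⟩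
  rintro y ⟨θ, -, rfl⟩
  exact bean_circle_le θ

lemma omega_ge_one : 1 ≤ ω₀ := by
  have hmem : ‖bean (Complex.exp ((0:ℝ) * Complex.I))‖ ∈
      ((fun θ : ℝ => ‖bean (Complex.exp (θ * Complex.I))‖) '' Set.Ico 0 (2 * Real.pi)) := by
    exact ⟨0, ⟨le_refl 0, by positivity⟩, rfl⟩
  have hval : (1:ℝ) ≤ ‖bean (Complex.exp ((0:ℝ) * Complex.I))‖ := by
    have h0 : Complex.exp ((0:ℝ) * Complex.I) = 1 := by simp
    rw [h0, bean]
    have ht : Complex.tanh 1 = ((Real.tanh 1 : ℝ) : ℂ) := by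
      rw [Complex.ofReal_tanh]; norm_num
    rw [ht, abs_half_pow]
    have htr : (0:ℝ) ≤ Real.tanh 1 := by
      rw [Real.tanh_eq_sinh_div_cosh]
      exact div_nonneg (Real.sinh_nonneg_iff.mpr (by norm_num)) (Real.cosh_pos 1).le
    have : (1 : ℂ) + ((Real.tanh 1 : ℝ) : ℂ) = (((1 + Real.tanh 1 : ℝ)) : ℂ) := by push_cast; ring
    have habs2 : ‖(((1 + Real.tanh 1 : ℝ)) : ℂ)‖ = 1 + Real.tanh 1 := by
      rw [Complex.norm_real, Real.norm_eq_abs]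
      exact abs_of_nonneg (by linarith)
    rw [this, habs2]
    calc (1:ℝ) = Real.sqrt 1 := (Real.sqrt_one).symm
      _ ≤ Real.sqrt (1 + Real.tanh 1) := Real.sqrt_le_sqrt (by linarith)
  exact le_trans hval (le_csSup omega_bddAbove hmem)

set_option maxHeartbeats 1000000 in
lemma step (β γ : ℂ) (p w₁ : ℂ → ℂ)
    (hp : DifferentiableOn ℂ p unitDisk) (hp0 : p 0 = 1)
    (hne : ∀ z ∈ unitDisk, β * p z + γ ≠ 0)
    (hw₁ : ∀ z ∈ unitDisk, ‖w₁ z‖ < 1)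
    (heq : ∀ z ∈ unitDisk,
      p z + z * deriv p z / (β * p z + γ) = (1 + w₁ z) ^ ((1:ℂ)/2))
    (ρ : ℝ) (hρ0 : 0 < ρ) (hρ1 : ρ < 1) (M : ℝ) (hM : 0 ≤ M)
    (HM : ∀ z : ℂ, ‖z‖ ≤ ρ → ‖p z - 1‖ ≤ M) :
    ∀ z : ℂ, ‖z‖ ≤ ρ → ‖p z - 1‖ ≤
      (‖β‖ * (1 + M) + ‖γ‖) * (Real.sqrt 2 + 1 + M) := by
  have hUopen : IsOpen unitDisk := Metric.isOpen_ball
  set g : ℂ → ℂ := fun z => β * p z + γ with hgdef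
  set h : ℂ → ℂ := fun z => deriv p z / g z with hhdef
  have hpa : AnalyticOnNhd ℂ p unitDisk := hp.analyticOnNhd hUopen
  have hd : DifferentiableOn ℂ (deriv p) unitDisk := hpa.deriv.differentiableOn
  have hgd : DifferentiableOn ℂ g unitDisk := (hp.const_mul β).add_const γ
  have hhd : DifferentiableOn ℂ h unitDisk := hd.div hgd hne
  have hball : Metric.closedBall (0:ℂ) ρ ⊆ unitDisk := Metric.closedBall_subset_ball hρ1
  have habs_mem : ∀ {z : ℂ}, ‖z‖ ≤ ρ → z ∈ Metric.closedBall (0:ℂ) ρ := by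
    intro z hz
    simpa [Metric.mem_closedBall, dist_zero_right] using hz
  -- max modulus bound on h
  have hmax : ∀ z : ℂ, ‖z‖ ≤ ρ → ‖h z‖ ≤ (Real.sqrt 2 + 1 + M) / ρ := by
    intro z hz
    have hcl : z ∈ closure (Metric.ball (0:ℂ) ρ) := by
      rw [closure_ball (0:ℂ) hρ0.ne']
      exact habs_mem hz
    refine Complex.norm_le_of_forall_mem_frontier_norm_le Metric.isBounded_ball ?_ ?_ hcl
    · constructor
      · exact hhd.mono (fun x hx => hball (Metric.ball_subset_closedBall hx))
      · rw [closure_ball (0:ℂ) hρ0.ne']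
        exact (hhd.mono hball).continuousOn
    · intro ζ hζ
      rw [frontier_ball (0:ℂ) hρ0.ne'] at hζ
      have hζρ : ‖ζ‖ = ρ := by
        simpa [Metric.mem_sphere, dist_zero_right] using hζ
      have hζD : ζ ∈ unitDisk := memUD.mpr (by rw [hζρ]; exact hρ1)
      have hζ0 : ζ ≠ 0 := by
        intro h0; rw [h0] at hζρ; simp at hζρ; exact hρ0.ne' hζρ.symm
      have hq := heq ζ hζD
      have hrel : ζ * h ζ = (1 + w₁ ζ) ^ ((1:ℂ)/2) - p ζ := by
        have hhζ : h ζ = deriv p ζ / (β * p ζ + γ) := rfl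
        rw [hhζ, mul_div_assoc']
        linear_combination hq
      have hQ : ‖(1 + w₁ ζ) ^ ((1:ℂ)/2)‖ ≤ Real.sqrt 2 := by
        rw [abs_half_pow]
        refine Real.sqrt_le_sqrt ?_
        calc ‖1 + w₁ ζ‖ ≤ 1 + ‖w₁ ζ‖ := by
              simpa using norm_add_le 1 (w₁ ζ)
          _ ≤ 2 := by linarith [hw₁ ζ hζD]
      have hp1 : ‖p ζ - 1‖ ≤ M := HM ζ (le_of_eq hζρ)
      have habs : ρ * ‖h ζ‖ = ‖(1 + w₁ ζ) ^ ((1:ℂ)/2) - p ζ‖ := by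
        rw [← hrel, norm_mul, hζρ]
      have hub : ‖(1 + w₁ ζ) ^ ((1:ℂ)/2) - p ζ‖ ≤ Real.sqrt 2 + 1 + M := by
        have hrw : (1 + w₁ ζ) ^ ((1:ℂ)/2) - p ζ
            = ((1 + w₁ ζ) ^ ((1:ℂ)/2)) - 1 - (p ζ - 1) := by ring
        calc ‖(1 + w₁ ζ) ^ ((1:ℂ)/2) - p ζ‖
            = ‖((1 + w₁ ζ) ^ ((1:ℂ)/2)) - 1 - (p ζ - 1)‖ := by rw [hrw]
          _ ≤ ‖((1 + w₁ ζ) ^ ((1:ℂ)/2)) - 1‖ + ‖p ζ - 1‖ := by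
              exact norm_sub_le _ _
          _ ≤ (‖(1 + w₁ ζ) ^ ((1:ℂ)/2)‖ + 1) + M := by
              gcongr
              exact norm_sub_le _ _ |>.trans (by simp)
          _ ≤ Real.sqrt 2 + 1 + M := by linarith
      rw [le_div_iff₀ hρ0]
      nlinarith [norm_nonneg (h ζ)]
  -- derivative identity
  have hder : ∀ w ∈ unitDisk, deriv p w = g w * h w := by
    intro w hw
    simp only [hhdef]
    rw [mul_div_cancel₀]
    exact hne w hw
  -- FTC
  intro z₀ hz₀
  have hmem : ∀ t : ℝ, t ∈ Set.uIcc (0:ℝ) 1 → (↑t * z₀) ∈ unitDisk := by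
    intro t ht
    rw [Set.uIcc_of_le (by norm_num : (0:ℝ) ≤ 1)] at ht
    refine memUD.mpr ?_
    rw [norm_mul, Complex.norm_real, Real.norm_eq_abs, _root_.abs_of_nonneg ht.1]
    calc t * ‖z₀‖ ≤ 1 * ρ := by
          apply mul_le_mul ht.2 hz₀ (norm_nonneg z₀) zero_le_one
      _ < 1 := by linarith
  have hmemρ : ∀ t : ℝ, t ∈ Set.uIcc (0:ℝ) 1 → ‖↑t * z₀‖ ≤ ρ := by
    intro t ht
    rw [Set.uIcc_of_le (by norm_num : (0:ℝ) ≤ 1)] at ht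
    rw [norm_mul, Complex.norm_real, Real.norm_eq_abs, _root_.abs_of_nonneg ht.1]
    calc t * ‖z₀‖ ≤ 1 * ρ := by
          apply mul_le_mul ht.2 hz₀ (norm_nonneg z₀) zero_le_one
      _ = ρ := one_mul ρ
  have hderivt : ∀ t ∈ Set.uIcc (0:ℝ) 1,
      HasDerivAt (fun s : ℝ => p (↑s * z₀)) (deriv p (↑t * z₀) * z₀) t := by
    intro t ht
    have hinner : HasDerivAt p (deriv p (↑t * z₀)) (↑t * z₀) :=
      (hp.differentiableAt (hUopen.mem_nhds (hmem t ht))).hasDerivAt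
    have hmul : HasDerivAt (fun s : ℂ => s * z₀) z₀ (↑t : ℂ) := by
      simpa using (hasDerivAt_id ((t:ℝ) : ℂ)).mul_const z₀
    have hcomp : HasDerivAt (fun s : ℂ => p (s * z₀)) (deriv p (↑t * z₀) * z₀) (↑t : ℂ) :=
      HasDerivAt.comp _ hinner hmul
    exact hcomp.comp_ofReal
  have hcont : ContinuousOn (fun t : ℝ => deriv p (↑t * z₀) * z₀) (Set.uIcc (0:ℝ) 1) := by
    apply ContinuousOn.mul _ continuousOn_const
    apply hd.continuousOn.comp
    · exact Continuous.continuousOn (Complex.continuous_ofReal.mul continuous_const)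
    · intro t ht
      exact hmem t ht
  have hint := intervalIntegral.integral_eq_sub_of_hasDerivAt hderivt
    (hcont.intervalIntegrable)
  have hval : (∫ t in (0:ℝ)..1, deriv p (↑t * z₀) * z₀) = p z₀ - 1 := by
    have h1 : ((1:ℝ):ℂ) * z₀ = z₀ := by norm_num
    have h0 : ((0:ℝ):ℂ) * z₀ = (0:ℂ) := by norm_num
    rw [hint, h1, h0, hp0]
  set C := (‖β‖ * (1 + M) + ‖γ‖) * (Real.sqrt 2 + 1 + M) with hC
  have hbound : ∀ t ∈ Set.uIoc (0:ℝ) 1, ‖deriv p (↑t * z₀) * z₀‖ ≤ C := by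
    intro t ht
    have ht' : t ∈ Set.uIcc (0:ℝ) 1 := by
      rw [Set.uIcc_of_le (by norm_num : (0:ℝ) ≤ 1)]
      rw [Set.uIoc_of_le (by norm_num : (0:ℝ) ≤ 1)] at ht
      exact ⟨ht.1.le, ht.2⟩
    set wpt := (↑t : ℂ) * z₀ with hwpt
    have hwD : wpt ∈ unitDisk := hmem t ht'
    have hwρ : ‖wpt‖ ≤ ρ := hmemρ t ht'
    have hp_le : ‖p wpt‖ ≤ 1 + M := by
      have h9 := norm_add_le (p wpt - 1) 1
      rw [sub_add_cancel, norm_one] at h9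
      linarith [HM wpt hwρ]
    have hg : ‖g wpt‖ ≤ ‖β‖ * (1 + M) + ‖γ‖ := by
      have hgw : g wpt = β * p wpt + γ := rfl
      rw [hgw]
      calc ‖β * p wpt + γ‖ ≤ ‖β * p wpt‖ + ‖γ‖ :=
            norm_add_le _ _
        _ = ‖β‖ * ‖p wpt‖ + ‖γ‖ := by rw [norm_mul]
        _ ≤ ‖β‖ * (1 + M) + ‖γ‖ := by
            nlinarith [norm_nonneg β]
    have hh := hmax wpt hwρ
    rw [hder wpt hwD, norm_mul, norm_mul]
    calc ‖g wpt‖ * ‖h wpt‖ * ‖z₀‖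
        ≤ (‖β‖ * (1 + M) + ‖γ‖) * ((Real.sqrt 2 + 1 + M)/ρ) * ρ := by
          have h1 : (0:ℝ) ≤ ‖g wpt‖ := norm_nonneg _
          have h2 : (0:ℝ) ≤ ‖h wpt‖ := norm_nonneg _
          have h4 : (0:ℝ) ≤ (Real.sqrt 2 + 1 + M)/ρ := by positivity
          have h5 : (0:ℝ) ≤ ‖β‖ * (1 + M) + ‖γ‖ := by positivity
          apply mul_le_mul (mul_le_mul hg hh h2 h5) hz₀ (norm_nonneg z₀) (by positivity)
      _ = C := by
          rw [hC, mul_assoc, div_mul_cancel₀ _ hρ0.ne']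
  have := intervalIntegral.norm_integral_le_of_norm_le_const hbound
  rw [hval] at this
  simpa using this

set_option maxHeartbeats 2000000 in
lemma key (β γ : ℂ) (p w₁ : ℂ → ℂ)
    (hp : DifferentiableOn ℂ p unitDisk) (hp0 : p 0 = 1)
    (hne : ∀ z ∈ unitDisk, β * p z + γ ≠ 0)
    (hw₁ : ∀ z ∈ unitDisk, ‖w₁ z‖ < 1)
    (heq : ∀ z ∈ unitDisk,
      p z + z * deriv p z / (β * p z + γ) = (1 + w₁ z) ^ ((1:ℂ)/2))
    (hEβ : ‖β‖ ≤ 0.0656) (hEβγ : ‖β‖ + ‖γ‖ ≤ 0.0656) :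
    ∀ z ∈ unitDisk, ‖p z - 1‖ ≤ 0.21 := by
  have hUopen : IsOpen unitDisk := Metric.isOpen_ball
  have hs2b : Real.sqrt 2 ≤ 1.4142136 := by
    nlinarith [Real.sq_sqrt (show (0:ℝ) ≤ 2 by norm_num), Real.sqrt_nonneg 2]
  -- one shrink move
  have shrink : ∀ (ρ M N : ℝ), 0 < ρ → ρ < 1 → 0 ≤ M →
      0.0656 * (1+M) * (2.4142136+M) ≤ N →
      (∀ z : ℂ, ‖z‖ ≤ ρ → ‖p z - 1‖ ≤ M) →
      (∀ z : ℂ, ‖z‖ ≤ ρ → ‖p z - 1‖ ≤ N) := by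
    intro ρ M N hρ0 hρ1 hM hMN H z hz
    have hst := step β γ p w₁ hp hp0 hne hw₁ heq ρ hρ0 hρ1 M hM H z hz
    refine le_trans hst (le_trans ?_ hMN)
    have h1 : ‖β‖ * (1+M) + ‖γ‖ ≤ 0.0656 * (1+M) := by nlinarith
    have h2 : Real.sqrt 2 + 1 + M ≤ 2.4142136 + M := by linarith
    have h3 : (0:ℝ) ≤ ‖β‖ * (1+M) + ‖γ‖ := by
      positivity
    have h4 : (0:ℝ) ≤ Real.sqrt 2 + 1 + M := by positivity
    nlinarith
  have chain : ∀ ρ : ℝ, 0 < ρ → ρ < 1 →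
      (∀ z : ℂ, ‖z‖ ≤ ρ → ‖p z - 1‖ ≤ 11) →
      (∀ z : ℂ, ‖z‖ ≤ ρ → ‖p z - 1‖ ≤ 0.21) := by
    intro ρ h0 h1 H
    have s01 := shrink ρ 11 10.56 h0 h1 (by norm_num) (by norm_num) H
    have s02 := shrink ρ 10.56 9.84 h0 h1 (by norm_num) (by norm_num) s01
    have s03 := shrink ρ 9.84 8.72 h0 h1 (by norm_num) (by norm_num) s02
    have s04 := shrink ρ 8.72 7.10 h0 h1 (by norm_num) (by norm_num) s03
    have s05 := shrink ρ 7.10 5.06 h0 h1 (by norm_num) (by norm_num) s04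
    have s06 := shrink ρ 5.06 2.98 h0 h1 (by norm_num) (by norm_num) s05
    have s07 := shrink ρ 2.98 1.41 h0 h1 (by norm_num) (by norm_num) s06
    have s08 := shrink ρ 1.41 0.61 h0 h1 (by norm_num) (by norm_num) s07
    have s09 := shrink ρ 0.61 0.32 h0 h1 (by norm_num) (by norm_num) s08
    have s10 := shrink ρ 0.32 0.24 h0 h1 (by norm_num) (by norm_num) s09
    have s11 := shrink ρ 0.24 0.216 h0 h1 (by norm_num) (by norm_num) s10
    exact shrink ρ 0.216 0.21 h0 h1 (by norm_num) (by norm_num) s11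
  by_contra hcon
  push_neg at hcon
  obtain ⟨z₁, hz₁D, hz₁⟩ := hcon
  set B : Set ℝ := {r : ℝ | r ∈ Set.Ico (0:ℝ) 1 ∧
    ∃ z : ℂ, ‖z‖ ≤ r ∧ 0.21 < ‖p z - 1‖} with hBdef
  have hBne : B.Nonempty := by
    refine ⟨‖z₁‖, ⟨⟨norm_nonneg z₁, memUD.mp hz₁D⟩, z₁, le_rfl, hz₁⟩⟩
  have hBbd : BddBelow B := ⟨0, fun r hr => hr.1.1⟩
  set r₀ := sInf B with hr₀def
  have hr₀0 : 0 ≤ r₀ := le_csInf hBne (fun r hr => hr.1.1)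
  have hr₀1 : r₀ < 1 := lt_of_le_of_lt (csInf_le hBbd hBne.choose_spec) hBne.choose_spec.1.2
  -- points strictly inside radius r₀ are good
  have hgood : ∀ z : ℂ, ‖z‖ < r₀ → ‖p z - 1‖ ≤ 0.21 := by
    intro z hz
    by_contra hbad
    push_neg at hbad
    have hmemB : ‖z‖ ∈ B := by
      refine ⟨⟨norm_nonneg z, lt_trans hz hr₀1⟩, z, le_rfl, hbad⟩
    exact absurd (csInf_le hBbd hmemB) (not_le.mpr hz)
  -- closed ball of radius r₀ is good
  have hr₀good : ∀ z : ℂ, ‖z‖ ≤ r₀ → ‖p z - 1‖ ≤ 0.21 := by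
    intro z hz
    rcases lt_or_eq_of_le hz with hlt | heqr
    · exact hgood z hlt
    · rcases eq_or_ne z 0 with rfl | hz0
      · simp only [hp0, sub_self, norm_zero]; norm_num
      · have hzr : ‖z‖ = r₀ := heqr
        have hzpos : 0 < ‖z‖ := norm_pos_iff.mpr hz0
        have hzD : z ∈ unitDisk := memUD.mpr (by rw [hzr]; exact hr₀1)
        -- limit along s → 1 from the left
        have hval : ((1:ℝ):ℂ) * z = z := by norm_num
        have htin : Filter.Tendsto (fun s : ℝ => (↑s * z : ℂ)) (nhds 1) (nhds z) := by
          have hcm : Continuous (fun s : ℝ => (↑s * z : ℂ)) :=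
            Complex.continuous_ofReal.mul continuous_const
          have := hcm.tendsto (1:ℝ)
          rwa [hval] at this
        have hc2 : ContinuousAt p z :=
          (hp.differentiableAt (hUopen.mem_nhds hzD)).continuousAt
        have h3 : Filter.Tendsto (fun s : ℝ => p (↑s * z) - 1) (nhds 1)
            (nhds (p z - 1)) := (hc2.tendsto.comp htin).sub_const 1
        have hten : Filter.Tendsto (fun s : ℝ => ‖p (↑s * z) - 1‖)
            (nhdsWithin 1 (Set.Iio 1)) (nhds (‖p z - 1‖)) := by
          have h4 := (continuous_norm.tendsto (p z - 1)).comp h3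
          exact h4.mono_left nhdsWithin_le_nhds
        refine le_of_tendsto hten ?_
        have hev1 : ∀ᶠ s in nhdsWithin (1:ℝ) (Set.Iio 1), 0 < s := by
          apply eventually_nhdsWithin_of_eventually_nhds
          exact eventually_gt_nhds (by norm_num)
        have hev2 : ∀ᶠ s in nhdsWithin (1:ℝ) (Set.Iio 1), s < 1 :=
          eventually_mem_nhdsWithin.mono (fun s hs => hs)
        filter_upwards [hev1, hev2] with s hs0 hs1
        apply hgood
        rw [norm_mul, Complex.norm_real, Real.norm_eq_abs, _root_.abs_of_nonneg hs0.le, hzr]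
        calc s * r₀ < 1 * r₀ := by
              apply mul_lt_mul_of_pos_right hs1 (by rw [← hzr]; exact hzpos)
          _ = r₀ := one_mul r₀
  -- open set where |p - 1| < 11
  have hcontx : ContinuousOn (fun w : ℂ => p w - 1) unitDisk :=
    hp.continuousOn.sub continuousOn_const
  have hVopen : IsOpen (unitDisk ∩ (fun w : ℂ => p w - 1) ⁻¹' Metric.ball 0 11) :=
    hcontx.isOpen_inter_preimage hUopen Metric.isOpen_ball
  have hsubV : Metric.closedBall (0:ℂ) r₀ ⊆
      unitDisk ∩ (fun w : ℂ => p w - 1) ⁻¹' Metric.ball 0 11 := by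
    intro w hw
    have hwabs : ‖w‖ ≤ r₀ := by
      simpa [Metric.mem_closedBall, dist_zero_right] using hw
    constructor
    · exact memUD.mpr (lt_of_le_of_lt hwabs hr₀1)
    · have := hr₀good w hwabs
      simp only [Set.mem_preimage, Metric.mem_ball, dist_zero_right]
      linarith
  obtain ⟨δ, hδpos, hδsub⟩ := (isCompact_closedBall (0:ℂ) r₀).exists_thickening_subset_open
    hVopen hsubV
  set ρ := min (r₀ + δ/2) ((r₀+1)/2) with hρdef
  have hρ0 : 0 < ρ := by
    apply lt_min <;> [linarith; linarith]
  have hρ1 : ρ < 1 := lt_of_le_of_lt (min_le_right _ _) (by linarith)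
  have hρr₀ : r₀ < ρ := by
    apply lt_min <;> [linarith; linarith]
  -- closed ball ρ inside thickening
  have hthick : ∀ w : ℂ, ‖w‖ ≤ ρ →
      w ∈ Metric.thickening δ (Metric.closedBall (0:ℂ) r₀) := by
    intro w hw
    rw [Metric.mem_thickening_iff]
    rcases le_or_gt (‖w‖) r₀ with hle | hgt
    · refine ⟨w, ?_, by simp [hδpos]⟩
      simpa [Metric.mem_closedBall, dist_zero_right] using hle
    · have hwpos : 0 < ‖w‖ := lt_of_le_of_lt hr₀0 hgt
      refine ⟨((r₀ / ‖w‖ : ℝ) : ℂ) * w, ?_, ?_⟩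
      · have : ‖((r₀ / ‖w‖ : ℝ) : ℂ) * w‖ = r₀ := by
          rw [norm_mul, Complex.norm_real, Real.norm_eq_abs, _root_.abs_of_nonneg (by positivity)]
          field_simp
        simpa [Metric.mem_closedBall, dist_zero_right] using le_of_eq this
      · have heq2 : w - ((r₀ / ‖w‖ : ℝ) : ℂ) * w
            = ((1 - r₀ / ‖w‖ : ℝ) : ℂ) * w := by push_cast; ring
        have habs2 : dist w (((r₀ / ‖w‖ : ℝ) : ℂ) * w) = ‖w‖ - r₀ := by
          rw [dist_eq_norm, heq2, norm_mul, Complex.norm_real, Real.norm_eq_abs]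
          rw [_root_.abs_of_nonneg (by
            have : r₀ / ‖w‖ ≤ 1 := by
              rw [div_le_one hwpos]; exact hgt.le
            linarith)]
          field_simp
        rw [habs2]
        have : ‖w‖ ≤ r₀ + δ/2 := le_trans hw (min_le_left _ _)
        linarith
  have H11 : ∀ z : ℂ, ‖z‖ ≤ ρ → ‖p z - 1‖ ≤ 11 := by
    intro z hz
    have := hδsub (hthick z hz)
    have h2 := this.2
    simp only [Set.mem_preimage, Metric.mem_ball, dist_zero_right] at h2
    linarith
  have hfinal := chain ρ hρ0 hρ1 H11
  -- contradiction with sInf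
  have : r₀ < sInf B := by
    rw [hr₀def] at hρr₀ ⊢
    refine lt_of_lt_of_le hρr₀ (le_csInf hBne ?_)
    intro r hr
    by_contra hrlt
    push_neg at hrlt
    obtain ⟨zz, hzz1, hzz2⟩ := hr.2
    exact absurd (hfinal zz (le_trans hzz1 hrlt.le)) (not_le.mpr hzz2)
  exact lt_irrefl _ (hr₀def ▸ this)

set_option maxHeartbeats 1000000 in
lemma build (p : ℂ → ℂ) (hp : DifferentiableOn ℂ p unitDisk) (hp0 : p 0 = 1)
    (KEY : ∀ z ∈ unitDisk, ‖p z - 1‖ ≤ 0.21) : Subord p bean := by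
  have hUopen : IsOpen unitDisk := Metric.isOpen_ball
  set u : ℂ → ℂ := fun z => p z ^ 2 - 1 with hudef
  set w : ℂ → ℂ := fun z => (Complex.log (1 + u z) - Complex.log (1 - u z)) / 2 with hwdef
  have hu : ∀ z ∈ unitDisk, ‖u z‖ ≤ 0.4641 := by
    intro z hz
    have h1 : u z = (p z - 1) * (p z + 1) := by simp only [hudef]; ring
    have h2 : ‖p z + 1‖ ≤ ‖p z - 1‖ + 2 := by
      have h3 : p z + 1 = (p z - 1) + 2 := by ring
      rw [h3]
      calc ‖(p z - 1) + 2‖ ≤ ‖p z - 1‖ + ‖2‖ :=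
            norm_add_le _ _
        _ = ‖p z - 1‖ + 2 := by norm_num
    rw [h1, norm_mul]
    have hk := KEY z hz
    nlinarith [norm_nonneg (p z - 1), norm_nonneg (p z + 1)]
  have h1re : ∀ z ∈ unitDisk, 0 < (1 + u z).re := by
    intro z hz
    have := hu z hz
    have h2 : |(u z).re| ≤ ‖u z‖ := Complex.abs_re_le_norm _
    have h3 : (1 + u z).re = 1 + (u z).re := by simp
    rw [h3]
    have := abs_le.mp h2
    linarith
  have h2re : ∀ z ∈ unitDisk, 0 < (1 - u z).re := by
    intro z hz
    have := hu z hz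
    have h2 : |(u z).re| ≤ ‖u z‖ := Complex.abs_re_le_norm _
    have h3 : (1 - u z).re = 1 - (u z).re := by simp
    rw [h3]
    have := abs_le.mp h2
    linarith
  have hune : ∀ z ∈ unitDisk, (1 + u z) ≠ 0 := by
    intro z hz h0
    have := h1re z hz
    rw [h0] at this
    simp at this
  have hune2 : ∀ z ∈ unitDisk, (1 - u z) ≠ 0 := by
    intro z hz h0
    have := h2re z hz
    rw [h0] at this
    simp at this
  have hudiff : DifferentiableOn ℂ u unitDisk := by
    simp only [hudef]
    exact (hp.pow 2).sub_const 1
  have hwdiff : DifferentiableOn ℂ w unitDisk := by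
    simp only [hwdef]
    apply DifferentiableOn.div_const
    apply DifferentiableOn.sub
    · apply DifferentiableOn.clog ((differentiableOn_const 1).add hudiff)
      intro x hx
      exact Complex.mem_slitPlane_iff.mpr (Or.inl (h1re x hx))
    · apply DifferentiableOn.clog ((differentiableOn_const 1).sub hudiff)
      intro x hx
      exact Complex.mem_slitPlane_iff.mpr (Or.inl (h2re x hx))
  have hw0 : w 0 = 0 := by
    have h0D : (0:ℂ) ∈ unitDisk := memUD.mpr (by simp)
    simp only [hwdef, hudef, hp0]
    norm_num
  have hwlt : ∀ z ∈ unitDisk, ‖w z‖ < 1 := by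
    intro z hz
    have huz := hu z hz
    have huz1 : ‖u z‖ < 1 := lt_of_le_of_lt huz (by norm_num)
    have hl1 : ‖Complex.log (1 + u z)‖ ≤
        ‖u z‖ * (1 - ‖u z‖)⁻¹ := loglem huz1
    have hl2 : ‖Complex.log (1 - u z)‖ ≤
        ‖u z‖ * (1 - ‖u z‖)⁻¹ := by
      have h4 : (1 : ℂ) - u z = 1 + (-u z) := by ring
      rw [h4]
      have hnn : ‖-u z‖ = ‖u z‖ := norm_neg _
      have := loglem (v := -u z) (by rwa [hnn])
      rwa [hnn] at this
    have hle : ‖u z‖ * (1 - ‖u z‖)⁻¹ ≤ 0.867 := by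
      rw [mul_inv_le_iff₀ (by linarith)]
      nlinarith
    simp only [hwdef]
    rw [norm_div]
    have habs2 : ‖(2:ℂ)‖ = 2 := by norm_num
    rw [habs2]
    have := norm_sub_le (Complex.log (1 + u z)) (Complex.log (1 - u z))
    rw [div_lt_iff₀ (by norm_num : (0:ℝ) < 2)]
    linarith
  refine ⟨w, hwdiff, hw0, hwlt, ?_⟩
  intro z hz
  have hE0 : Complex.exp (w z) ≠ 0 := Complex.exp_ne_zero _
  have hE2 : Complex.exp (w z) * Complex.exp (w z) = (1 + u z) / (1 - u z) := by
    rw [← Complex.exp_add]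
    have : w z + w z = Complex.log (1 + u z) - Complex.log (1 - u z) := by
      simp only [hwdef]; ring
    rw [this, Complex.exp_sub, Complex.exp_log (hune z hz), Complex.exp_log (hune2 z hz)]
  have hden : Complex.exp (w z) + (Complex.exp (w z))⁻¹ ≠ 0 := by
    intro h0
    have h1 : Complex.exp (w z) * (Complex.exp (w z) + (Complex.exp (w z))⁻¹)
        = (1 + u z) / (1 - u z) + 1 := by
      rw [mul_add, hE2, mul_inv_cancel₀ hE0]
    rw [h0, mul_zero] at h1
    field_simp [hune2 z hz] at h1
    norm_num at h1
  have htanh : Complex.tanh (w z) = u z := by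
    rw [Complex.tanh_eq_sinh_div_cosh]
    have hs : Complex.sinh (w z) = (Complex.exp (w z) - (Complex.exp (w z))⁻¹) / 2 := by
      rw [show Complex.sinh (w z) = (Complex.exp (w z) - Complex.exp (-(w z))) / 2 from rfl,
        Complex.exp_neg]
    have hc : Complex.cosh (w z) = (Complex.exp (w z) + (Complex.exp (w z))⁻¹) / 2 := by
      rw [show Complex.cosh (w z) = (Complex.exp (w z) + Complex.exp (-(w z))) / 2 from rfl,
        Complex.exp_neg]
    have hEinv : Complex.exp (w z) * (Complex.exp (w z))⁻¹ = 1 := mul_inv_cancel₀ hE0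
    have EQN2 : Complex.exp (w z) * Complex.exp (w z) * (1 - u z) = 1 + u z := by
      rw [hE2, div_mul_eq_mul_div]
      exact mul_div_cancel_right₀ _ (hune2 z hz)
    have EQN : (Complex.exp (w z) - (Complex.exp (w z))⁻¹) * ((1 - u z) * Complex.exp (w z))
        = u z * (Complex.exp (w z) + (Complex.exp (w z))⁻¹) * ((1 - u z) * Complex.exp (w z)) := by
      linear_combination (1 - u z) * EQN2 - (1 + u z) * (1 - u z) * hEinv
    have hC : (1 - u z) * Complex.exp (w z) ≠ 0 := mul_ne_zero (hune2 z hz) hE0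
    rw [hs, hc, div_div_div_comm]
    norm_num
    rw [div_eq_iff hden]
    exact mul_right_cancel₀ hC EQN
  have hrep : 0 < (p z).re := by
    have hk := KEY z hz
    have h2 : |(p z - 1).re| ≤ ‖p z - 1‖ := Complex.abs_re_le_norm _
    have h3 : (p z - 1).re = (p z).re - 1 := by simp
    rw [h3] at h2
    have := abs_le.mp h2
    linarith
  rw [bean, htanh]
  have : (1 : ℂ) + u z = p z ^ 2 := by simp only [hudef]; ring
  rw [this, sq_half hrep]

set_option maxHeartbeats 1000000 in
theorem stmt_13 (β γ : ℂ) (hβ : β ≠ 0)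
    (hβγ : ‖β‖ * ω₀ + ‖γ‖ ≤
        ((1 + Real.exp 1 ^ 2) ^ ((3 : ℝ) / 2) / (Real.sqrt 2 * Real.exp 1) *
          (Real.sqrt 2 + ω₀))⁻¹)
    (p : ℂ → ℂ) (hp : DifferentiableOn ℂ p unitDisk) (hp0 : p 0 = 1)
    (hne : ∀ z ∈ unitDisk, β * p z + γ ≠ 0)
    (hsub : Subord (fun z => p z + z * deriv p z / (β * p z + γ))
        (fun z => (1 + z) ^ ((1 : ℂ) / 2))) :
    Subord p bean := by
  obtain ⟨w₁, _hw₁d, _hw₁0, hw₁lt, hw₁eq⟩ := hsub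
  have heq : ∀ z ∈ unitDisk,
      p z + z * deriv p z / (β * p z + γ) = (1 + w₁ z) ^ ((1:ℂ)/2) :=
    fun z hz => hw₁eq z hz
  -- numeric consequences of hβγ
  have he1 : (2.7182818283:ℝ) ≤ Real.exp 1 := Real.exp_one_gt_d9.le
  have he2 : Real.exp 1 ≤ 2.7182818286 := Real.exp_one_lt_d9.le
  have hs2a : (1.4142135:ℝ) ≤ Real.sqrt 2 := by
    nlinarith [Real.sq_sqrt (show (0:ℝ) ≤ 2 by norm_num), Real.sqrt_nonneg 2]
  have hs2b : Real.sqrt 2 ≤ 1.4142136 := by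
    nlinarith [Real.sq_sqrt (show (0:ℝ) ≤ 2 by norm_num), Real.sqrt_nonneg 2]
  have hx : (8.389056:ℝ) ≤ 1 + Real.exp 1 ^ 2 := by nlinarith
  have hxpos : (0:ℝ) < 1 + Real.exp 1 ^ 2 := by nlinarith
  have h32 : (1 + Real.exp 1 ^ 2) ^ ((3:ℝ)/2)
      = (1 + Real.exp 1 ^ 2) * Real.sqrt (1 + Real.exp 1 ^ 2) := by
    rw [show (3:ℝ)/2 = 1 + 1/2 by norm_num, Real.rpow_add hxpos, Real.rpow_one,
      Real.sqrt_eq_rpow]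
  have hsx : (2.896386:ℝ) ≤ Real.sqrt (1 + Real.exp 1 ^ 2) := by
    nlinarith [Real.sq_sqrt hxpos.le, Real.sqrt_nonneg (1 + Real.exp 1 ^ 2)]
  have hA : (24.2979:ℝ) ≤ (1 + Real.exp 1 ^ 2) ^ ((3:ℝ)/2) := by
    rw [h32]; nlinarith
  have hden : Real.sqrt 2 * Real.exp 1 ≤ 3.8442320 := by nlinarith
  have hdenpos : (0:ℝ) < Real.sqrt 2 * Real.exp 1 := by nlinarith
  have hC : (6.3206:ℝ) ≤ (1 + Real.exp 1 ^ 2) ^ ((3:ℝ)/2) / (Real.sqrt 2 * Real.exp 1) := by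
    rw [le_div_iff₀ hdenpos]; nlinarith
  have hfac : (2.4142135:ℝ) ≤ Real.sqrt 2 + ω₀ := by
    have := omega_ge_one; linarith
  have hX : (15.244:ℝ) ≤ (1 + Real.exp 1 ^ 2) ^ ((3:ℝ)/2) / (Real.sqrt 2 * Real.exp 1) *
      (Real.sqrt 2 + ω₀) := by nlinarith
  have hinv : ((1 + Real.exp 1 ^ 2) ^ ((3:ℝ)/2) / (Real.sqrt 2 * Real.exp 1) *
      (Real.sqrt 2 + ω₀))⁻¹ ≤ 0.0656 := by
    have h1 : ((1 + Real.exp 1 ^ 2) ^ ((3:ℝ)/2) / (Real.sqrt 2 * Real.exp 1) *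
        (Real.sqrt 2 + ω₀))⁻¹ ≤ (15.244:ℝ)⁻¹ := by
      apply inv_anti₀ (by norm_num) hX
    calc _ ≤ (15.244:ℝ)⁻¹ := h1
      _ ≤ 0.0656 := by norm_num
  have h0β : 0 ≤ ‖β‖ := norm_nonneg β
  have h0γ : 0 ≤ ‖γ‖ := norm_nonneg γ
  have hω := omega_ge_one
  have hc := le_trans hβγ hinv
  have h1 : ‖β‖ ≤ ‖β‖ * ω₀ := le_mul_of_one_le_right h0β hω
  have hEβ : ‖β‖ ≤ 0.0656 := by linarith
  have hEβγ : ‖β‖ + ‖γ‖ ≤ 0.0656 := by linarith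
  have KEY := key β γ p w₁ hp hp0 hne hw₁lt heq hEβ hEβγ
  exact build p hp hp0 KEY
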